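/- Let ℓ : ℝ × ℝ → ℝ be of the form ℓ(x, y) = g(x) + y·h(x) with g, h twice continuously differentiable and bounded second derivatives (|g''| ≤ M, |h''| ≤ M, and labels bounded |y| ≤ 1). Then for all x_i, x_j, y_i, y_j with |y_i|, |y_j| ≤ 1 and λ ∈ [0,1], the difference between the global Mixup loss ℓ((1-λ)x_i + λx_j, (1-λ)y_i + λy_j) and the FedMix surrogate (1-λ)·ℓ((1-λ)x_i, y_i) + λ·ℓ((1-λ)x_i, y_j) + λ·∂_xℓ((1-λ)x_i, y_i)·x_j is bounded in absolute value by C·λ²·(1 + x_j² + |x_j|) for some constant C depending only on M and a bound on |h'| near (1-λ)x_i. -/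

import Mathlib

/-- Second-order Taylor bound: if `f` is C² with `|f''| ≤ M` everywhere, then
`|f (a+t) - f a - f' a * t| ≤ M * t ^ 2`. -/
lemma taylor2_bound (f : ℝ → ℝ) (M : ℝ) (hf : ContDiff ℝ 2 f)
    (hM : ∀ x, |iteratedDeriv 2 f x| ≤ M) (a t : ℝ) :
    |f (a + t) - f a - deriv f a * t| ≤ M * t ^ 2 := by
  have hM0 : 0 ≤ M := le_trans (abs_nonneg _) (hM 0)
  have hfd : Differentiable ℝ f := hf.differentiable (by norm_num)
  have hf1 : ContDiff ℝ 1 (deriv f) :=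
    (contDiff_succ_iff_deriv.mp (show ContDiff ℝ (1 + 1) f by norm_num; exact hf)).2.2
  have hfd' : Differentiable ℝ (deriv f) := hf1.differentiable (by norm_num)
  have hd2 : ∀ x, deriv (deriv f) x = iteratedDeriv 2 f x := by
    intro x
    rw [show (2 : ℕ) = 1 + 1 from rfl, iteratedDeriv_succ, iteratedDeriv_one]
  -- Lipschitz bound on deriv f
  have lip : ∀ x y : ℝ, |deriv f x - deriv f y| ≤ M * |x - y| := by
    intro x y
    have := Convex.norm_image_sub_le_of_norm_hasDerivWithin_le
      (f := deriv f) (f' := deriv (deriv f))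
      (fun z _ => ((hfd' z).hasDerivAt).hasDerivWithinAt)
      (fun z _ => by rw [Real.norm_eq_abs, hd2]; exact hM z)
      convex_univ (Set.mem_univ y) (Set.mem_univ x)
    simpa [Real.norm_eq_abs] using this
  -- the remainder function
  set φ : ℝ → ℝ := fun s => f (a + s) - f a - deriv f a * s with hφ
  have hφd : ∀ s : ℝ, HasDerivAt φ (deriv f (a + s) - deriv f a) s := by
    intro s
    have h1 : HasDerivAt (fun s : ℝ => f (a + s)) (deriv f (a + s)) s := by
      simpa using ((hfd (a + s)).hasDerivAt).comp_const_add a s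
    have h2 : HasDerivAt (fun s : ℝ => f a + deriv f a * s)
        (deriv f a) s := by
      simpa using ((hasDerivAt_id s).const_mul (deriv f a)).const_add (f a)
    have := h1.sub h2
    simpa [hφ, sub_sub, Pi.sub_def] using this
  have hmem0 : (0 : ℝ) ∈ Set.Icc (-|t|) (|t|) := by
    constructor <;> simp [abs_nonneg]
  have hmemt : t ∈ Set.Icc (-|t|) (|t|) := ⟨neg_abs_le t, le_abs_self t⟩
  have hbound : ∀ s ∈ Set.Icc (-|t|) (|t|),
      ‖deriv f (a + s) - deriv f a‖ ≤ M * |t| := by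
    intro s hs
    have hs' : |s| ≤ |t| := abs_le.mpr ⟨hs.1, hs.2⟩
    have := lip (a + s) a
    rw [Real.norm_eq_abs]
    calc |deriv f (a + s) - deriv f a| ≤ M * |a + s - a| := this
      _ = M * |s| := by ring_nf
      _ ≤ M * |t| := by exact mul_le_mul_of_nonneg_left hs' hM0
  have := Convex.norm_image_sub_le_of_norm_hasDerivWithin_le
    (f := φ) (f' := fun s => deriv f (a + s) - deriv f a)
    (fun s _ => (hφd s).hasDerivWithinAt) hbound
    (convex_Icc _ _) hmem0 hmemt
  have hφ0 : φ 0 = 0 := by simp [hφ]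
  have habs : |φ t| ≤ M * |t| * |t| := by
    simpa [hφ0, Real.norm_eq_abs] using this
  calc |f (a + t) - f a - deriv f a * t| = |φ t| := rfl
    _ ≤ M * |t| * |t| := habs
    _ = M * t ^ 2 := by rw [mul_assoc, ← abs_mul, ← sq, abs_of_nonneg (sq_nonneg t)]

/-- Quantitative O(λ²) error bound for the FedMix surrogate of the global Mixup loss. -/
theorem fedmix_surrogate_error_bound (g h : ℝ → ℝ) (M H : ℝ)
    (hg : ContDiff ℝ 2 g) (hh : ContDiff ℝ 2 h)
    (hg'' : ∀ x, |iteratedDeriv 2 g x| ≤ M) (hh'' : ∀ x, |iteratedDeriv 2 h x| ≤ M)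
    (hh' : ∀ x, |deriv h x| ≤ H) :
    ∃ C : ℝ, 0 ≤ C ∧
      ∀ xi xj yi yj lam : ℝ, |yi| ≤ 1 → |yj| ≤ 1 → 0 ≤ lam → lam ≤ 1 →
        |(g ((1 - lam) * xi + lam * xj)
              + ((1 - lam) * yi + lam * yj) * h ((1 - lam) * xi + lam * xj))
            - ((1 - lam) * (g ((1 - lam) * xi) + yi * h ((1 - lam) * xi))
              + lam * (g ((1 - lam) * xi) + yj * h ((1 - lam) * xi))
              + lam * (deriv g ((1 - lam) * xi) + yi * deriv h ((1 - lam) * xi)) * xj)|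
          ≤ C * lam ^ 2 * (1 + xj ^ 2 + |xj|) := by
  have hM0 : 0 ≤ M := le_trans (abs_nonneg _) (hg'' 0)
  have hH0 : 0 ≤ H := le_trans (abs_nonneg _) (hh' 0)
  refine ⟨2 * M + 2 * H, by linarith, ?_⟩
  intro xi xj yi yj lam hyi hyj hl0 hl1
  set a := (1 - lam) * xi with ha
  set t := lam * xj with ht
  have hsum : (1 - lam) * xi + lam * xj = a + t := by rw [ha, ht]
  rw [hsum]
  set yb := (1 - lam) * yi + lam * yj with hyb
  have hRg := taylor2_bound g M hg hg'' a t
  have hRh := taylor2_bound h M hh hh'' a t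
  have hyb1 : |yb| ≤ 1 := by
    rw [hyb]
    calc |(1 - lam) * yi + lam * yj| ≤ |(1 - lam) * yi| + |lam * yj| := abs_add_le _ _
      _ = (1 - lam) * |yi| + lam * |yj| := by
          rw [abs_mul, abs_mul, abs_of_nonneg (by linarith : (0:ℝ) ≤ 1 - lam),
            abs_of_nonneg hl0]
      _ ≤ (1 - lam) * 1 + lam * 1 :=
          add_le_add (mul_le_mul_of_nonneg_left hyi (by linarith))
            (mul_le_mul_of_nonneg_left hyj hl0)
      _ = 1 := by ring
  have hE : (g (a + t) + yb * h (a + t))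
        - ((1 - lam) * (g a + yi * h a) + lam * (g a + yj * h a)
          + lam * (deriv g a + yi * deriv h a) * xj)
      = (g (a + t) - g a - deriv g a * t)
        + yb * (h (a + t) - h a - deriv h a * t)
        + lam * (yj - yi) * deriv h a * t := by
    rw [ht, hyb]; ring
  rw [hE]
  have hterm3 : |lam * (yj - yi) * deriv h a * t| ≤ 2 * H * lam ^ 2 * |xj| := by
    have h1 : |yj - yi| ≤ 2 := by
      calc |yj - yi| ≤ |yj| + |yi| := abs_sub _ _
        _ ≤ 2 := by linarith
    have heq : |lam * (yj - yi) * deriv h a * t|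
        = lam * |yj - yi| * |deriv h a| * (lam * |xj|) := by
      rw [ht, abs_mul, abs_mul, abs_mul, abs_mul, abs_of_nonneg hl0]
    rw [heq]
    have step1 : |yj - yi| * |deriv h a| ≤ 2 * H :=
      mul_le_mul h1 (hh' a) (abs_nonneg _) (by norm_num)
    calc lam * |yj - yi| * |deriv h a| * (lam * |xj|)
        = (|yj - yi| * |deriv h a|) * (lam * (lam * |xj|)) := by ring
      _ ≤ (2 * H) * (lam * (lam * |xj|)) :=
          mul_le_mul_of_nonneg_right step1
            (mul_nonneg hl0 (mul_nonneg hl0 (abs_nonneg _)))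
      _ = 2 * H * lam ^ 2 * |xj| := by ring
  have habs2 : |yb * (h (a + t) - h a - deriv h a * t)| ≤ M * t ^ 2 := by
    rw [abs_mul]
    calc |yb| * |h (a + t) - h a - deriv h a * t|
        ≤ 1 * (M * t ^ 2) := mul_le_mul hyb1 hRh (abs_nonneg _) (by norm_num)
      _ = M * t ^ 2 := by ring
  have ht2 : t ^ 2 = lam ^ 2 * xj ^ 2 := by rw [ht]; ring
  have hxj : 0 ≤ |xj| := abs_nonneg xj
  calc |(g (a + t) - g a - deriv g a * t)
        + yb * (h (a + t) - h a - deriv h a * t)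
        + lam * (yj - yi) * deriv h a * t|
      ≤ |(g (a + t) - g a - deriv g a * t)
          + yb * (h (a + t) - h a - deriv h a * t)|
        + |lam * (yj - yi) * deriv h a * t| := abs_add_le _ _
    _ ≤ (|g (a + t) - g a - deriv g a * t|
          + |yb * (h (a + t) - h a - deriv h a * t)|)
        + |lam * (yj - yi) * deriv h a * t| := by
        gcongr
        exact abs_add_le _ _
    _ ≤ (M * t ^ 2 + M * t ^ 2) + 2 * H * lam ^ 2 * |xj| :=
        add_le_add (add_le_add hRg habs2) hterm3
    _ ≤ (2 * M + 2 * H) * lam ^ 2 * (1 + xj ^ 2 + |xj|) := by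
        rw [ht2]
        nlinarith [sq_nonneg lam, sq_nonneg xj, mul_nonneg (sq_nonneg lam) (sq_nonneg xj),
          mul_nonneg (sq_nonneg lam) hxj, mul_nonneg hM0 (mul_nonneg (sq_nonneg lam) hxj),
          mul_nonneg hH0 (sq_nonneg lam), mul_nonneg hH0 (mul_nonneg (sq_nonneg lam) (sq_nonneg xj))]
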